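/- arXiv:math/0005063 — 2 statements merged into one kernel-verified Lean document; each statement's English description precedes it below -/
import Mathlib

section
/- Let V be a congruence-modular variety of algebras, B ∈ V, and μ, α congruences on B. Then α laxly centralizes μ with respect to V if and only if the commutator [μ, α] = ⊥. -/
/-!
Basic universal algebra: signatures, algebras, homomorphisms, congruences
(forming a complete lattice), generated congruences, images and preimages of
congruences, quotient algebras, subalgebras, products, ultraproducts,
varieties (classes closed under H, S, P), the term-condition commutator,
relatively free algebras, and lax centrality.
-/

universe u v

namespace UAlg

/-- A (finitary) signature: a type of operation symbols with arities. -/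
structure Signature : Type (u + 1) where
  ops : Type u
  arity : ops → ℕ

/-- An algebra of signature `S`. -/
structure Algebra (S : Signature.{u}) : Type (u + 1) where
  carrier : Type u
  interp : ∀ o : S.ops, (Fin (S.arity o) → carrier) → carrier

variable {S : Signature.{u}}

/-- A homomorphism of algebras. -/
structure Hom (A B : Algebra S) : Type u where
  toFun : A.carrier → B.carrier
  map_interp : ∀ (o : S.ops) (a : Fin (S.arity o) → A.carrier),
    toFun (A.interp o a) = B.interp o (fun i => toFun (a i))

/-- Composition of homomorphisms. -/
def Hom.comp {A B C : Algebra S} (g : Hom B C) (f : Hom A B) : Hom A C where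
  toFun := g.toFun ∘ f.toFun
  map_interp o a := by
    simp only [Function.comp, f.map_interp, g.map_interp]

/-- A congruence on an algebra: an equivalence relation compatible with the
operations. -/
structure Cong (A : Algebra S) : Type u where
  r : A.carrier → A.carrier → Prop
  iseqv : Equivalence r
  compat : ∀ (o : S.ops) (a b : Fin (S.arity o) → A.carrier),
    (∀ i, r (a i) (b i)) → r (A.interp o a) (A.interp o b)

namespace Cong

variable {A : Algebra S}

theorem ext {c d : Cong A} (h : ∀ x y, c.r x y ↔ d.r x y) : c = d := by
  cases c; cases d
  simp only [mk.injEq]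
  funext x y
  exact propext (h x y)

instance : PartialOrder (Cong A) where
  le c d := ∀ x y, c.r x y → d.r x y
  le_refl c := fun _ _ h => h
  le_trans a b c hab hbc := fun x y h => hbc x y (hab x y h)
  le_antisymm a b h1 h2 := ext fun x y => ⟨h1 x y, h2 x y⟩

instance : InfSet (Cong A) where
  sInf s :=
    { r := fun x y => ∀ c ∈ s, c.r x y
      iseqv :=
        ⟨fun x c _ => c.iseqv.refl x,
         fun h c hc => c.iseqv.symm (h c hc),
         fun h1 h2 c hc => c.iseqv.trans (h1 c hc) (h2 c hc)⟩
      compat := fun o a b h c hc => c.compat o a b fun i => h i c hc }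

instance : CompleteLattice (Cong A) :=
  completeLatticeOfInf _ (fun s =>
    ⟨fun c hc x y h => h c hc, fun _ hd x y h c hc => hd hc x y h⟩)

end Cong

/-- The congruence generated by a binary relation. -/
def conGen (A : Algebra S) (s : A.carrier → A.carrier → Prop) : Cong A :=
  sInf {c : Cong A | ∀ x y, s x y → c.r x y}

/-- The kernel congruence of a homomorphism. -/
def Hom.ker {A B : Algebra S} (f : Hom A B) : Cong A where
  r x y := f.toFun x = f.toFun y
  iseqv := ⟨fun _ => rfl, Eq.symm, Eq.trans⟩
  compat o a b h := by
    show f.toFun (A.interp o a) = f.toFun (A.interp o b)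
    rw [f.map_interp, f.map_interp]
    exact congrArg _ (funext h)

/-- `conMap f α` (written `→f α` in the paper) is the congruence of `B`
generated by the image `f(α)` of the congruence `α` of `A`. -/
def conMap {A B : Algebra S} (f : Hom A B) (α : Cong A) : Cong B :=
  conGen B (fun x y => ∃ a a', α.r a a' ∧ f.toFun a = x ∧ f.toFun a' = y)

/-- The inverse image `f⁻¹(β)` of a congruence. -/
def conComap {A B : Algebra S} (f : Hom A B) (β : Cong B) : Cong A where
  r x y := β.r (f.toFun x) (f.toFun y)
  iseqv :=
    ⟨fun _ => β.iseqv.refl _, fun h => β.iseqv.symm h,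
     fun h1 h2 => β.iseqv.trans h1 h2⟩
  compat o a b h := by
    show β.r (f.toFun (A.interp o a)) (f.toFun (A.interp o b))
    rw [f.map_interp, f.map_interp]
    exact β.compat o _ _ h

/-- The setoid underlying a congruence. -/
def Cong.toSetoid {A : Algebra S} (c : Cong A) : Setoid A.carrier :=
  ⟨c.r, c.iseqv⟩

/-- The quotient algebra of an algebra by a congruence. -/
noncomputable def quotAlg (A : Algebra S) (c : Cong A) : Algebra S where
  carrier := Quotient c.toSetoid
  interp o a := Quotient.mk c.toSetoid (A.interp o (fun i => (a i).out))

/-- The natural (quotient) homomorphism `A → A/c`. -/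
def natHom (A : Algebra S) (c : Cong A) : Hom A (quotAlg A c) where
  toFun := Quotient.mk c.toSetoid
  map_interp o a := by
    apply Quotient.sound
    apply c.compat
    intro i
    show c.r (a i) (Quotient.mk c.toSetoid (a i)).out
    exact Quotient.exact ((Quotient.out_eq (Quotient.mk c.toSetoid (a i))).symm)

/-- A subuniverse: a subset closed under the operations. -/
structure Subuniverse (A : Algebra S) : Type u where
  carrier : Set A.carrier
  closed : ∀ (o : S.ops) (a : Fin (S.arity o) → A.carrier),
    (∀ i, a i ∈ carrier) → A.interp o a ∈ carrier

/-- The subalgebra determined by a subuniverse. -/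
def Subuniverse.alg {A : Algebra S} (s : Subuniverse A) : Algebra S where
  carrier := {x // x ∈ s.carrier}
  interp o a := ⟨A.interp o (fun i => (a i).1), s.closed o _ (fun i => (a i).2)⟩

/-- The product of a family of algebras. -/
def prodAlg {ι : Type u} (A : ι → Algebra S) : Algebra S where
  carrier := ∀ i, (A i).carrier
  interp o a i := (A i).interp o (fun j => a j i)

/-- A variety: a class of algebras closed under homomorphic images,
subalgebras, and products. -/
structure IsVariety (V : Algebra S → Prop) : Prop where
  closed_hom : ∀ (A B : Algebra S) (f : Hom A B),
    Function.Surjective f.toFun → V A → V B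
  closed_sub : ∀ (A : Algebra S) (s : Subuniverse A), V A → V s.alg
  closed_prod : ∀ (ι : Type u) (A : ι → Algebra S), (∀ i, V (A i)) → V (prodAlg A)

/-- `α` laxly centralizes `μ` with respect to the class `V`. -/
def LaxCentralizes (V : Algebra S → Prop) (B : Algebra S) (μ α : Cong B) : Prop :=
  ∃ C : Algebra S, V C ∧ ∃ (π : Hom C B) (β γ : Cong C),
    Function.Surjective π.toFun ∧ μ ≤ conMap π β ∧ α ≤ conMap π γ ∧ β ⊓ γ = ⊥

/-- `B` is a homomorphic image of a member of `K`. -/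
def InH (K : Algebra S → Prop) (B : Algebra S) : Prop :=
  ∃ A, K A ∧ ∃ f : Hom A B, Function.Surjective f.toFun

/-- `B` embeds into a product of members of `K`, i.e. `B ∈ SP(K)`. -/
def InSP (K : Algebra S → Prop) (B : Algebra S) : Prop :=
  ∃ (ι : Type u) (A : ι → Algebra S), (∀ i, K (A i)) ∧
    ∃ f : Hom B (prodAlg A), Function.Injective f.toFun

/-- `B ∈ HSP(K)`: `B` is a homomorphic image of an algebra embeddable in a
product of members of `K`. -/
def InHSP (K : Algebra S → Prop) (B : Algebra S) : Prop :=
  ∃ C : Algebra S, InSP K C ∧ ∃ f : Hom C B, Function.Surjective f.toFun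

/-- The congruence on a product given by an ultrafilter on the index set. -/
def ultraCong {ι : Type u} (A : ι → Algebra S) (U : Ultrafilter ι) :
    Cong (prodAlg A) where
  r x y := {i | x i = y i} ∈ U
  iseqv := by
    refine ⟨fun x => ?_, fun {x y} h => ?_, fun {x y z} h1 h2 => ?_⟩
    · have : {i | x i = x i} = Set.univ := by ext i; simp
      rw [this]; exact Filter.univ_mem
    · have : {i | y i = x i} = {i | x i = y i} := by ext i; exact eq_comm
      rw [this]; exact h
    · refine Filter.mem_of_superset (Filter.inter_mem h1 h2) ?_
      intro i hi
      exact hi.1.trans hi.2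
  compat o a b h := by
    have h1 : (⋂ j, {i | a j i = b j i}) ∈ (U : Filter ι) :=
      (Filter.iInter_mem).2 h
    refine Filter.mem_of_superset h1 ?_
    intro i hi
    simp only [Set.mem_iInter, Set.mem_setOf_eq] at hi
    show (A i).interp o (fun j => a j i) = (A i).interp o (fun j => b j i)
    exact congrArg _ (funext hi)

/-- `B ∈ HSP_u(K)`: `B` is a homomorphic image of an algebra embeddable in an
ultraproduct of members of `K`. -/
def InHSPu (K : Algebra S → Prop) (B : Algebra S) : Prop :=
  ∃ (ι : Type u) (A : ι → Algebra S) (U : Ultrafilter ι), (∀ i, K (A i)) ∧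
    ∃ C : Algebra S,
      (∃ g : Hom C (quotAlg (prodAlg A) (ultraCong A U)),
        Function.Injective g.toFun) ∧
      ∃ f : Hom C B, Function.Surjective f.toFun

/-- `μ` is the monolith of `B`: the minimum nontrivial congruence.
In particular its existence means `B` is subdirectly irreducible. -/
def IsMonolith (B : Algebra S) (μ : Cong B) : Prop :=
  μ ≠ ⊥ ∧ ∀ θ : Cong B, θ ≠ ⊥ → μ ≤ θ

/-- Terms of signature `S` over a set `X` of variables. -/
inductive Tm (S : Signature.{u}) (X : Type v) : Type max u v where
  | var : X → Tm S X
  | app : (o : S.ops) → (Fin (S.arity o) → Tm S X) → Tm S X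

/-- Evaluation of a term in an algebra under an assignment of the variables. -/
def Tm.eval {X : Type v} (A : Algebra S) (v : X → A.carrier) :
    Tm S X → A.carrier
  | .var x => v x
  | .app o t => A.interp o (fun i => Tm.eval A v (t i))

/-- The (term-condition) centralizing relation `C(α, β; δ)`. -/
def Centralizes {A : Algebra S} (α β δ : Cong A) : Prop :=
  ∀ (n : ℕ) (t : Tm S (Unit ⊕ Fin n)) (a b : A.carrier)
    (c d : Fin n → A.carrier),
    α.r a b → (∀ i, β.r (c i) (d i)) →
    δ.r (t.eval A (Sum.elim (fun _ => a) c)) (t.eval A (Sum.elim (fun _ => a) d)) →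
    δ.r (t.eval A (Sum.elim (fun _ => b) c)) (t.eval A (Sum.elim (fun _ => b) d))

/-- The commutator `[α, β]`: the least congruence `δ` such that `α`
centralizes `β` modulo `δ` (the Freese–McKenzie commutator, which is the
modular commutator in congruence-modular varieties). -/
def commutator {A : Algebra S} (α β : Cong A) : Cong A :=
  sInf {δ : Cong A | Centralizes α β δ}

/-- The term algebra over a set of variables. -/
def termAlg (S : Signature.{u}) (X : Type u) : Algebra S :=
  ⟨Tm S X, Tm.app⟩

/-- The congruence of `V`-equations on the term algebra: two terms are related
iff they evaluate the same way in every member of `V`. -/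
def eqThy (V : Algebra S → Prop) (X : Type u) : Cong (termAlg S X) where
  r s t := ∀ A : Algebra S, V A → ∀ v : X → A.carrier, s.eval A v = t.eval A v
  iseqv :=
    ⟨fun _ _ _ _ => rfl, fun h A hA v => (h A hA v).symm,
     fun h1 h2 A hA v => (h1 A hA v).trans (h2 A hA v)⟩
  compat o a b h A hA v := by
    show Tm.eval A v (Tm.app o a) = Tm.eval A v (Tm.app o b)
    simp only [Tm.eval]
    exact congrArg _ (funext fun i => h i A hA v)

/-- The relatively free algebra of `V` on the set `X` of generators. -/
noncomputable def freeAlg (V : Algebra S → Prop) (X : Type u) : Algebra S :=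
  quotAlg (termAlg S X) (eqThy V X)

/-- The canonical generators of the relatively free algebra. -/
def freeGen (V : Algebra S → Prop) (X : Type u) (x : X) :
    (freeAlg V X).carrier :=
  Quotient.mk (eqThy V X).toSetoid (Tm.var x)

/-- The homomorphism from the relatively free algebra of `V` to an algebra
`B ∈ V` induced by an assignment of the generators. -/
def evalFreeHom (V : Algebra S → Prop) (X : Type u) (B : Algebra S)
    (hB : V B) (v : X → B.carrier) : Hom (freeAlg V X) B where
  toFun := Quotient.lift (fun t : Tm S X => t.eval B v) (fun s t h => h B hB v)
  map_interp o a := by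
    show Tm.eval B v (Tm.app o (fun i => (a i).out)) = _
    simp only [Tm.eval]
    congr 1
    funext i
    conv_rhs => rw [← Quotient.out_eq (a i)]
    rfl


/-! ### Auxiliary machinery -/

section Aux

variable {S : Signature.{u}}

namespace Cong

variable {A : Algebra S}

theorem r_of_le {c d : Cong A} (h : c ≤ d) {x y : A.carrier} (hxy : c.r x y) : d.r x y :=
  h x y hxy

theorem refl (c : Cong A) (x : A.carrier) : c.r x x := c.iseqv.refl x

theorem symm (c : Cong A) {x y : A.carrier} (h : c.r x y) : c.r y x := c.iseqv.symm h

theorem trans (c : Cong A) {x y z : A.carrier} (h : c.r x y) (h' : c.r y z) : c.r x z :=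
  c.iseqv.trans h h'

theorem sInf_r {s : Set (Cong A)} {x y : A.carrier} :
    (sInf s).r x y ↔ ∀ c ∈ s, c.r x y := Iff.rfl

/-- The diagonal congruence, i.e. equality. -/
def diag (A : Algebra S) : Cong A where
  r x y := x = y
  iseqv := ⟨fun _ => rfl, Eq.symm, Eq.trans⟩
  compat o a b h := congrArg _ (funext h)

theorem bot_r {x y : A.carrier} : (⊥ : Cong A).r x y ↔ x = y := by
  constructor
  · intro h
    exact r_of_le bot_le (d := diag A) h
  · rintro rfl
    exact (⊥ : Cong A).refl x

/-- The pointwise meet of two congruences. -/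
def meet (c d : Cong A) : Cong A where
  r x y := c.r x y ∧ d.r x y
  iseqv := ⟨fun x => ⟨c.refl x, d.refl x⟩, fun h => ⟨c.symm h.1, d.symm h.2⟩,
    fun h h' => ⟨c.trans h.1 h'.1, d.trans h.2 h'.2⟩⟩
  compat o a b h := ⟨c.compat o a b fun i => (h i).1, d.compat o a b fun i => (h i).2⟩

theorem inf_r {c d : Cong A} {x y : A.carrier} :
    (c ⊓ d).r x y ↔ c.r x y ∧ d.r x y := by
  constructor
  · intro h
    exact ⟨r_of_le inf_le_left h, r_of_le inf_le_right h⟩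
  · intro h
    have hle : meet c d ≤ c ⊓ d := le_inf (fun x y h => h.1) (fun x y h => h.2)
    exact hle x y h

end Cong

namespace Tm

variable {X : Type v} {Y : Type v}

/-- Substitution in terms. -/
def subst (f : X → Tm S Y) : Tm S X → Tm S Y
  | .var x => f x
  | .app o a => .app o (fun i => (a i).subst f)

theorem eval_subst (A : Algebra S) (f : X → Tm S Y) (v : Y → A.carrier) (t : Tm S X) :
    (t.subst f).eval A v = t.eval A (fun x => (f x).eval A v) := by
  induction t with
  | var x => rfl
  | app o a ih =>
    show A.interp o _ = A.interp o _
    exact congrArg _ (funext fun i => ih i)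

end Tm

/-- Congruences are preserved by evaluation of terms. -/
theorem Cong.eval_r {A : Algebra S} (c : Cong A) {X : Type v} (t : Tm S X)
    {v w : X → A.carrier} (h : ∀ x, c.r (v x) (w x)) :
    c.r (t.eval A v) (t.eval A w) := by
  induction t with
  | var x => exact h x
  | app o a ih => exact c.compat o _ _ fun i => ih i

/-- Homomorphisms commute with evaluation of terms. -/
theorem Hom.eval_comm {A B : Algebra S} (f : Hom A B) {X : Type v} (t : Tm S X)
    (v : X → A.carrier) :
    f.toFun (t.eval A v) = t.eval B (fun x => f.toFun (v x)) := by
  induction t with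
  | var x => rfl
  | app o a ih =>
    show f.toFun (A.interp o _) = B.interp o _
    rw [f.map_interp]
    exact congrArg _ (funext fun i => ih i)

end Aux
section Aux2

variable {S : Signature.{u}}

/-- Generic tool: a reflexive transitive relation which is closed under changing one
argument of an operation at a time is compatible. -/
theorem compat_of_update {A : Algebra S} (r : A.carrier → A.carrier → Prop)
    (hrefl : ∀ x, r x x) (htrans : ∀ {x y z}, r x y → r y z → r x z)
    (hstep : ∀ (o : S.ops) (f : Fin (S.arity o) → A.carrier) (i : Fin (S.arity o))
      (u v : A.carrier), r u v →
      r (A.interp o (Function.update f i u)) (A.interp o (Function.update f i v)))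
    (o : S.ops) (a b : Fin (S.arity o) → A.carrier) (h : ∀ i, r (a i) (b i)) :
    r (A.interp o a) (A.interp o b) := by
  -- hybrid families
  let n := S.arity o
  let g : ℕ → Fin n → A.carrier := fun m i => if (i : ℕ) < m then b i else a i
  have hg0 : g 0 = a := by
    funext i; simp [g]
  have hgn : g n = b := by
    funext i; simp [g, i.isLt]
  have key : ∀ m : ℕ, r (A.interp o (g m)) (A.interp o (g (m + 1))) := by
    intro m
    by_cases hm : m < n
    · let i0 : Fin n := ⟨m, hm⟩
      have h1 : g m = Function.update (g m) i0 (a i0) := by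
        funext i
        rcases eq_or_ne i i0 with rfl | hne
        · simp [Function.update, g, i0]
        · rw [Function.update_of_ne hne]
      have h2 : g (m + 1) = Function.update (g m) i0 (b i0) := by
        funext i
        rcases eq_or_ne i i0 with rfl | hne
        · simp [Function.update, g, i0]
        · rw [Function.update_of_ne hne]
          have : (i : ℕ) ≠ m := fun hh => hne (Fin.ext hh)
          simp only [g]
          by_cases hlt : (i : ℕ) < m
          · rw [if_pos hlt, if_pos (Nat.lt_succ_of_lt hlt)]
          · rw [if_neg hlt, if_neg (by omega)]
      rw [h1, h2]
      exact hstep o (g m) i0 (a i0) (b i0) (h i0)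
    · have : g (m + 1) = g m := by
        funext i
        have hi : (i : ℕ) < m ∧ (i : ℕ) < m + 1 := ⟨by omega, by omega⟩
        simp only [g, if_pos hi.1, if_pos hi.2]
      rw [this]
      exact hrefl _
  have main : ∀ m : ℕ, r (A.interp o (g 0)) (A.interp o (g m)) := by
    intro m
    induction m with
    | zero => exact hrefl _
    | succ k ih => exact htrans ih (key k)
  have := main n
  rw [hg0, hgn] at this
  exact this

open Relation in
/-- The join of two congruences, described by chains. -/
def Cong.joinChain {A : Algebra S} (c d : Cong A) : Cong A where
  r := ReflTransGen (fun p q => c.r p q ∨ d.r p q)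
  iseqv := by
    refine ⟨fun x => ReflTransGen.refl, ?_, fun h h' => ReflTransGen.trans h h'⟩
    · intro x y h
      haveI : Std.Symm (fun p q => c.r p q ∨ d.r p q) :=
        ⟨fun p q hpq => hpq.elim (fun h => Or.inl (c.symm h)) (fun h => Or.inr (d.symm h))⟩
      exact Std.Symm.symm x y h
  compat o a b h := by
    refine compat_of_update _ (fun x => ReflTransGen.refl)
      (fun h1 h2 => ReflTransGen.trans h1 h2) ?_ o a b h
    intro o f i u v huv
    refine Relation.ReflTransGen.lift (fun z => A.interp o (Function.update f i z)) ?_ _ _ huv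
    intro p q hpq
    rcases hpq with h1 | h1
    · exact Or.inl (c.compat o _ _ fun j => by
        rcases eq_or_ne j i with rfl | hne
        · simpa using h1
        · rw [Function.update_of_ne hne, Function.update_of_ne hne]; exact c.refl _)
    · exact Or.inr (d.compat o _ _ fun j => by
        rcases eq_or_ne j i with rfl | hne
        · simpa using h1
        · rw [Function.update_of_ne hne, Function.update_of_ne hne]; exact d.refl _)

theorem Cong.sup_r {A : Algebra S} {c d : Cong A} {x y : A.carrier} :
    (c ⊔ d).r x y ↔ Relation.ReflTransGen (fun p q => c.r p q ∨ d.r p q) x y := by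
  constructor
  · intro h
    have hle : c ⊔ d ≤ joinChain c d := by
      refine sup_le ?_ ?_ <;> intro p q hpq
      · exact Relation.ReflTransGen.single (Or.inl hpq)
      · exact Relation.ReflTransGen.single (Or.inr hpq)
    exact hle x y h
  · intro h
    induction h with
    | refl => exact (c ⊔ d).refl x
    | tail h1 h2 ih =>
      refine (c ⊔ d).trans ih ?_
      rcases h2 with h2 | h2
      · exact r_of_le le_sup_left h2
      · exact r_of_le le_sup_right h2

theorem conGen_le {A : Algebra S} {s : A.carrier → A.carrier → Prop} {c : Cong A}
    (h : ∀ x y, s x y → c.r x y) : conGen A s ≤ c :=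
  sInf_le h

theorem conGen_r_of {A : Algebra S} {s : A.carrier → A.carrier → Prop} {x y : A.carrier}
    (h : s x y) : (conGen A s).r x y :=
  fun _ hc => hc x y h

theorem conMap_r_of {A B : Algebra S} (f : Hom A B) {θ : Cong A} {u v : A.carrier}
    (h : θ.r u v) : (conMap f θ).r (f.toFun u) (f.toFun v) :=
  conGen_r_of ⟨u, v, h, rfl, rfl⟩

theorem conComap_mono {A B : Algebra S} (f : Hom A B) {c d : Cong B} (h : c ≤ d) :
    conComap f c ≤ conComap f d :=
  fun _ _ hxy => h _ _ hxy

end Aux2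
section Aux3

variable {S : Signature.{u}}

/-- Direct image of a congruence containing the kernel, along a surjection. -/
def pushCong {A B : Algebra S} (f : Hom A B) (hf : Function.Surjective f.toFun)
    (c : Cong A) (hker : f.ker ≤ c) : Cong B where
  r x y := ∃ u v, c.r u v ∧ f.toFun u = x ∧ f.toFun v = y
  iseqv := by
    refine ⟨fun x => ?_, ?_, ?_⟩
    · obtain ⟨u, rfl⟩ := hf x
      exact ⟨u, u, c.refl u, rfl, rfl⟩
    · rintro x y ⟨u, v, h, rfl, rfl⟩
      exact ⟨v, u, c.symm h, rfl, rfl⟩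
    · rintro x y z ⟨u, v, h, rfl, hv⟩ ⟨u', v', h', hu', rfl⟩
      refine ⟨u, v', c.trans h (c.trans ?_ h'), rfl, rfl⟩
      exact hker v u' (hv.trans hu'.symm)
  compat o a b h := by
    choose u v huv hu hv using h
    refine ⟨A.interp o u, A.interp o v, c.compat o u v huv, ?_, ?_⟩
    · rw [f.map_interp]; exact congrArg _ (funext hu)
    · rw [f.map_interp]; exact congrArg _ (funext hv)

theorem conComap_conMap_le {A B : Algebra S} (f : Hom A B)
    (hf : Function.Surjective f.toFun) (θ : Cong A) :
    conComap f (conMap f θ) ≤ θ ⊔ f.ker := by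
  have h1 : conMap f θ ≤ pushCong f hf (θ ⊔ f.ker) le_sup_right := by
    refine conGen_le ?_
    rintro x y ⟨u, v, h, rfl, rfl⟩
    exact ⟨u, v, Cong.r_of_le le_sup_left h, rfl, rfl⟩
  refine le_trans (conComap_mono f h1) ?_
  rintro x y ⟨u, v, h, hu, hv⟩
  have hxu : f.ker.r x u := hu.symm
  have hvy : f.ker.r v y := hv
  exact (θ ⊔ f.ker).trans (Cong.r_of_le le_sup_right hxu)
    ((θ ⊔ f.ker).trans h (Cong.r_of_le le_sup_right hvy))

/-- Gumm's Shifting Lemma, in the form we use. -/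
theorem shifting {A : Algebra S} (hm : IsModularLattice (Cong A))
    {vert horiz d : Cong A} (hd : d ≤ horiz) {p q p' q' : A.carrier}
    (hpq : vert.r p q) (hpq' : vert.r p' q') (hq : horiz.r q q') (hp : d.r p p') :
    (d ⊔ vert ⊓ horiz).r q q' := by
  haveI := hm
  have h1 : (d ⊔ vert).r q q' :=
    (d ⊔ vert).trans (Cong.r_of_le le_sup_right (vert.symm hpq))
      ((d ⊔ vert).trans (Cong.r_of_le le_sup_left hp) (Cong.r_of_le le_sup_right hpq'))
  have h2 : ((d ⊔ vert) ⊓ horiz).r q q' := Cong.inf_r.mpr ⟨h1, hq⟩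
  have h3 : (d ⊔ vert) ⊓ horiz = d ⊔ vert ⊓ horiz := sup_inf_assoc_of_le vert hd
  rwa [h3] at h2

/-- The subuniverse of `ρ`-related pairs in `A × A`. -/
def pairSub {A : Algebra S} (ρ : Cong A) :
    Subuniverse (prodAlg (fun _ : ULift.{u} Bool => A)) where
  carrier := {x | ρ.r (x (ULift.up false)) (x (ULift.up true))}
  closed o a h := ρ.compat o _ _ fun i => h i

/-- The algebra of `ρ`-related pairs. -/
def pairAlg {A : Algebra S} (ρ : Cong A) : Algebra S := (pairSub ρ).alg

def mkPair {A : Algebra S} {ρ : Cong A} (x y : A.carrier) (h : ρ.r x y) :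
    (pairAlg ρ).carrier :=
  ⟨fun i => bif i.down then y else x, h⟩

/-- first component of a pair -/
def pfst {A : Algebra S} {ρ : Cong A} (z : (pairAlg ρ).carrier) : A.carrier :=
  z.1 (ULift.up false)

def psnd {A : Algebra S} {ρ : Cong A} (z : (pairAlg ρ).carrier) : A.carrier :=
  z.1 (ULift.up true)

theorem pmem {A : Algebra S} {ρ : Cong A} (z : (pairAlg ρ).carrier) :
    ρ.r (pfst z) (psnd z) := z.2

@[simp] theorem pfst_mk {A : Algebra S} {ρ : Cong A} (x y : A.carrier) (h : ρ.r x y) :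
    pfst (mkPair x y h) = x := rfl

@[simp] theorem psnd_mk {A : Algebra S} {ρ : Cong A} (x y : A.carrier) (h : ρ.r x y) :
    psnd (mkPair x y h) = y := rfl

theorem pair_ext {A : Algebra S} {ρ : Cong A} {z w : (pairAlg ρ).carrier}
    (h1 : pfst z = pfst w) (h2 : psnd z = psnd w) : z = w := by
  apply Subtype.ext
  funext i
  obtain ⟨b⟩ := i
  cases b
  · exact h1
  · exact h2

theorem pfst_interp {A : Algebra S} {ρ : Cong A} (o : S.ops)
    (a : Fin (S.arity o) → (pairAlg ρ).carrier) :
    pfst ((pairAlg ρ).interp o a) = A.interp o (fun i => pfst (a i)) := rfl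

theorem psnd_interp {A : Algebra S} {ρ : Cong A} (o : S.ops)
    (a : Fin (S.arity o) → (pairAlg ρ).carrier) :
    psnd ((pairAlg ρ).interp o a) = A.interp o (fun i => psnd (a i)) := rfl

theorem pfst_eval {A : Algebra S} {ρ : Cong A} {X : Type v} (t : Tm S X)
    (v : X → (pairAlg ρ).carrier) :
    pfst (t.eval (pairAlg ρ) v) = t.eval A (fun x => pfst (v x)) := by
  induction t with
  | var x => rfl
  | app o a ih =>
    rw [show (Tm.app o a).eval (pairAlg ρ) v = (pairAlg ρ).interp o (fun i => (a i).eval _ v) from rfl,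
      pfst_interp]
    exact congrArg _ (funext fun i => ih i)

theorem psnd_eval {A : Algebra S} {ρ : Cong A} {X : Type v} (t : Tm S X)
    (v : X → (pairAlg ρ).carrier) :
    psnd (t.eval (pairAlg ρ) v) = t.eval A (fun x => psnd (v x)) := by
  induction t with
  | var x => rfl
  | app o a ih =>
    rw [show (Tm.app o a).eval (pairAlg ρ) v = (pairAlg ρ).interp o (fun i => (a i).eval _ v) from rfl,
      psnd_interp]
    exact congrArg _ (funext fun i => ih i)

/-- The congruence on the pair algebra given by a congruence on the first components. -/
def fstCong {A : Algebra S} (ρ θ : Cong A) : Cong (pairAlg ρ) where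
  r z w := θ.r (pfst z) (pfst w)
  iseqv := ⟨fun z => θ.refl _, fun h => θ.symm h, fun h h' => θ.trans h h'⟩
  compat o a b h := by
    show θ.r (pfst _) (pfst _)
    rw [pfst_interp, pfst_interp]
    exact θ.compat o _ _ h

def sndCong {A : Algebra S} (ρ θ : Cong A) : Cong (pairAlg ρ) where
  r z w := θ.r (psnd z) (psnd w)
  iseqv := ⟨fun z => θ.refl _, fun h => θ.symm h, fun h h' => θ.trans h h'⟩
  compat o a b h := by
    show θ.r (psnd _) (psnd _)
    rw [psnd_interp, psnd_interp]
    exact θ.compat o _ _ h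

/-- The congruence on the pair algebra acting as `θ` on both components. -/
def bothCong {A : Algebra S} (ρ θ : Cong A) : Cong (pairAlg ρ) where
  r z w := θ.r (pfst z) (pfst w) ∧ θ.r (psnd z) (psnd w)
  iseqv := ⟨fun z => ⟨θ.refl _, θ.refl _⟩, fun h => ⟨θ.symm h.1, θ.symm h.2⟩,
    fun h h' => ⟨θ.trans h.1 h'.1, θ.trans h.2 h'.2⟩⟩
  compat o a b h := by
    refine ⟨?_, ?_⟩
    · show θ.r (pfst _) (pfst _)
      rw [pfst_interp, pfst_interp]; exact θ.compat o _ _ fun i => (h i).1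
    · show θ.r (psnd _) (psnd _)
      rw [psnd_interp, psnd_interp]; exact θ.compat o _ _ fun i => (h i).2

end Aux3
section Forward

variable {S : Signature.{u}}

theorem meet_le_snd {C : Algebra S} {β γ κ : Cong C}
    (hmC : IsModularLattice (Cong C)) (hmD : IsModularLattice (Cong (pairAlg β)))
    (hβγ : β ⊓ γ = ⊥) :
    (bothCong β γ ⊔ bothCong β κ) ⊓ fstCong β κ ≤ sndCong β κ := by
  haveI := hmD
  have h1 : bothCong β κ ≤ fstCong β κ := fun z w h => h.1
  have h2 : (bothCong β κ ⊔ bothCong β γ) ⊓ fstCong β κ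
      = bothCong β κ ⊔ bothCong β γ ⊓ fstCong β κ :=
    sup_inf_assoc_of_le _ h1
  have h3 : bothCong β γ ⊓ fstCong β κ ≤ sndCong β κ := by
    intro z w h
    have h' := Cong.inf_r.mp h
    have hγ : (bothCong β γ).r z w := h'.1
    have hκ1 : κ.r (pfst z) (pfst w) := h'.2
    have hsl := shifting hmC (d := κ ⊓ γ) inf_le_right (pmem z) (pmem w) hγ.2
      (Cong.inf_r.mpr ⟨hκ1, hγ.1⟩)
    have heq : κ ⊓ γ ⊔ β ⊓ γ = κ ⊓ γ := by rw [hβγ, sup_bot_eq]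
    rw [heq] at hsl
    show κ.r (psnd z) (psnd w)
    exact Cong.r_of_le inf_le_left hsl
  rw [sup_comm (bothCong β γ) (bothCong β κ), h2]
  exact sup_le (fun z w h => h.2) h3

theorem centr_beta {C : Algebra S} {β γ κ : Cong C}
    (hmC : IsModularLattice (Cong C)) (hmD : IsModularLattice (Cong (pairAlg β)))
    (hβγ : β ⊓ γ = ⊥) {n : ℕ} (t : Tm S (Unit ⊕ Fin n)) {a b : C.carrier}
    {c d : Fin n → C.carrier} (hab : β.r a b)
    (hcd : ∀ i, (γ ⊔ κ).r (c i) (d i))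
    (hyp : κ.r (t.eval C (Sum.elim (fun _ => a) c)) (t.eval C (Sum.elim (fun _ => a) d))) :
    κ.r (t.eval C (Sum.elim (fun _ => b) c)) (t.eval C (Sum.elim (fun _ => b) d)) := by
  classical
  let TupR : (Fin n → C.carrier) → (Fin n → C.carrier) → Prop := fun E F =>
    (∀ i, γ.r (E i) (F i)) ∨ (∀ i, κ.r (E i) (F i))
  -- tuple chain
  have tup : Relation.ReflTransGen TupR c d := by
    have h : ∀ i, Relation.ReflTransGen (fun p q => γ.r p q ∨ κ.r p q) (c i) (d i) :=
      fun i => Cong.sup_r.mp (hcd i)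
    let g : ℕ → Fin n → C.carrier := fun m i => if (i : ℕ) < m then d i else c i
    have hg0 : g 0 = c := by funext i; simp [g]
    have hgn : g n = d := by funext i; simp [g, i.isLt]
    have key : ∀ m : ℕ, Relation.ReflTransGen TupR (g m) (g (m + 1)) := by
      intro m
      by_cases hm : m < n
      · let i0 : Fin n := ⟨m, hm⟩
        have h1 : g m = Function.update (g m) i0 (c i0) := by
          funext i
          rcases eq_or_ne i i0 with rfl | hne
          · simp [Function.update, g, i0]
          · rw [Function.update_of_ne hne]
        have h2 : g (m + 1) = Function.update (g m) i0 (d i0) := by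
          funext i
          rcases eq_or_ne i i0 with rfl | hne
          · simp [Function.update, g, i0]
          · rw [Function.update_of_ne hne]
            have hne' : (i : ℕ) ≠ m := fun hh => hne (Fin.ext hh)
            simp only [g]
            by_cases hlt : (i : ℕ) < m
            · rw [if_pos hlt, if_pos (Nat.lt_succ_of_lt hlt)]
            · rw [if_neg hlt, if_neg (by omega)]
        rw [h1, h2]
        refine Relation.ReflTransGen.lift (fun z => Function.update (g m) i0 z) ?_ _ _ (h i0)
        intro p q hpq
        dsimp only [Function.onFun]
        rcases hpq with h1' | h1'
        · refine Or.inl fun j => ?_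
          rcases eq_or_ne j i0 with rfl | hne
          · simpa using h1'
          · rw [Function.update_of_ne hne, Function.update_of_ne hne]; exact γ.refl _
        · refine Or.inr fun j => ?_
          rcases eq_or_ne j i0 with rfl | hne
          · simpa using h1'
          · rw [Function.update_of_ne hne, Function.update_of_ne hne]; exact κ.refl _
      · have heq : g (m + 1) = g m := by
          funext i
          have h1 : (i : ℕ) < m := by omega
          simp only [g, if_pos h1, if_pos (by omega : (i:ℕ) < m + 1)]
        rw [heq]
    have main : ∀ m : ℕ, Relation.ReflTransGen TupR (g 0) (g m) := by
      intro m
      induction m with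
      | zero => exact Relation.ReflTransGen.refl
      | succ k ih => exact ih.trans (key k)
    have := main n
    rwa [hg0, hgn] at this
  -- the pair elements
  have hβE : ∀ E : Fin n → C.carrier,
      β.r (t.eval C (Sum.elim (fun _ => a) E)) (t.eval C (Sum.elim (fun _ => b) E)) := by
    intro E
    refine Cong.eval_r β t ?_
    rintro (x | i)
    · exact hab
    · exact β.refl _
  let P : (Fin n → C.carrier) → (pairAlg β).carrier := fun E =>
    mkPair (t.eval C (Sum.elim (fun _ => a) E)) (t.eval C (Sum.elim (fun _ => b) E)) (hβE E)
  have hstepP : ∀ {E F : Fin n → C.carrier}, TupR E F →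
      (bothCong β γ ⊔ bothCong β κ).r (P E) (P F) := by
    intro E F hEF
    rcases hEF with hEF | hEF
    · refine Cong.r_of_le le_sup_left ?_
      refine ⟨Cong.eval_r γ t ?_, Cong.eval_r γ t ?_⟩ <;>
        (rintro (x | i); exacts [γ.refl _, hEF i])
    · refine Cong.r_of_le le_sup_right ?_
      refine ⟨Cong.eval_r κ t ?_, Cong.eval_r κ t ?_⟩ <;>
        (rintro (x | i); exacts [κ.refl _, hEF i])
  have hPcd : (bothCong β γ ⊔ bothCong β κ).r (P c) (P d) := by
    clear hcd hyp
    induction tup with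
    | refl => exact (bothCong β γ ⊔ bothCong β κ).refl _
    | tail h1 h2 ih => exact (bothCong β γ ⊔ bothCong β κ).trans ih (hstepP h2)
  have hfst : (fstCong β κ).r (P c) (P d) := hyp
  have := meet_le_snd hmC hmD hβγ (P c) (P d) (Cong.inf_r.mpr ⟨hPcd, hfst⟩)
  exact this

theorem centr_up {C : Algebra S} {β γ κ : Cong C}
    (hmC : IsModularLattice (Cong C)) (hmD : IsModularLattice (Cong (pairAlg β)))
    (hβγ : β ⊓ γ = ⊥) {n : ℕ} (t : Tm S (Unit ⊕ Fin n)) {a b : C.carrier}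
    {c d : Fin n → C.carrier} (hab : (β ⊔ κ).r a b)
    (hcd : ∀ i, (γ ⊔ κ).r (c i) (d i))
    (hyp : κ.r (t.eval C (Sum.elim (fun _ => a) c)) (t.eval C (Sum.elim (fun _ => a) d))) :
    κ.r (t.eval C (Sum.elim (fun _ => b) c)) (t.eval C (Sum.elim (fun _ => b) d)) := by
  have hchain := Cong.sup_r.mp hab
  clear hab
  induction hchain with
  | refl => exact hyp
  | @tail u v h1 h2 ih =>
    rcases h2 with h2 | h2
    · exact centr_beta hmC hmD hβγ t h2 hcd ih
    · have hc' : κ.r (t.eval C (Sum.elim (fun _ => v) c)) (t.eval C (Sum.elim (fun _ => u) c)) := by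
        refine Cong.eval_r κ t ?_
        rintro (x | i)
        · exact κ.symm h2
        · exact κ.refl _
      have hd' : κ.r (t.eval C (Sum.elim (fun _ => u) d)) (t.eval C (Sum.elim (fun _ => v) d)) := by
        refine Cong.eval_r κ t ?_
        rintro (x | i)
        · exact h2
        · exact κ.refl _
      exact κ.trans hc' (κ.trans ih hd')

end Forward
section Backward

variable {S : Signature.{u}}

/-- The diagonal homomorphism into the pair algebra. -/
def dHom {B : Algebra S} (α : Cong B) : Hom B (pairAlg α) where
  toFun b := mkPair b b (α.refl b)
  map_interp o a := by
    refine pair_ext ?_ ?_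
    · rw [pfst_interp]; rfl
    · rw [psnd_interp]; rfl

@[simp] theorem pfst_dHom {B : Algebra S} (α : Cong B) (b : B.carrier) :
    pfst ((dHom α).toFun b) = b := rfl

@[simp] theorem psnd_dHom {B : Algebra S} (α : Cong B) (b : B.carrier) :
    psnd ((dHom α).toFun b) = b := rfl

/-- The "diagonality centralizer" relation on the pair algebra. -/
def zetaR {B : Algebra S} (α : Cong B) (z w : (pairAlg α).carrier) : Prop :=
  ∀ (k : ℕ) (t : Tm S (Unit ⊕ Fin k)) (e : Fin k → (pairAlg α).carrier),
    (pfst (t.eval (pairAlg α) (Sum.elim (fun _ => z) e))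
      = psnd (t.eval (pairAlg α) (Sum.elim (fun _ => z) e)))
    ↔ (pfst (t.eval (pairAlg α) (Sum.elim (fun _ => w) e))
      = psnd (t.eval (pairAlg α) (Sum.elim (fun _ => w) e)))

/-- `zetaR` is a congruence on the pair algebra. -/
def zeta {B : Algebra S} (α : Cong B) : Cong (pairAlg α) where
  r := zetaR α
  iseqv := by
    refine ⟨fun z k t e => Iff.rfl, fun h k t e => (h k t e).symm,
      fun h h' k t e => (h k t e).trans (h' k t e)⟩
  compat o a b h := by
    classical
    refine compat_of_update (zetaR α) (fun z k t e => Iff.rfl)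
      (fun h1 h2 k t e => (h1 k t e).trans (h2 k t e)) ?_ o a b h
    clear h a b o
    intro o f i u v huv k t e
    let σ : Unit ⊕ Fin k → Tm S (Unit ⊕ Fin (k + S.arity o)) := fun x =>
      match x with
      | Sum.inl _ => Tm.app o (fun j => if j = i then Tm.var (Sum.inl ())
          else Tm.var (Sum.inr (finSumFinEquiv (Sum.inr j))))
      | Sum.inr m => Tm.var (Sum.inr (finSumFinEquiv (Sum.inl m)))
    let e' : Fin (k + S.arity o) → (pairAlg α).carrier := fun m =>
      Sum.elim e f (finSumFinEquiv.symm m)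
    have key : ∀ z : (pairAlg α).carrier,
        (t.subst σ).eval (pairAlg α) (Sum.elim (fun _ => z) e')
          = t.eval (pairAlg α) (Sum.elim (fun _ => (pairAlg α).interp o (Function.update f i z)) e) := by
      intro z
      rw [Tm.eval_subst]
      refine congrArg (fun vv => t.eval (pairAlg α) vv) ?_
      funext x
      rcases x with x | m
      · show (pairAlg α).interp o _ = (pairAlg α).interp o (Function.update f i z)
        refine congrArg _ ?_
        funext j
        dsimp only
        by_cases hj : j = i
        · subst hj
          rw [if_pos rfl, Function.update_self]
          rfl
        · rw [if_neg hj, Function.update_of_ne hj]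
          show e' (finSumFinEquiv (Sum.inr j)) = f j
          simp only [e', Equiv.symm_apply_apply, Sum.elim_inr]
      · show e' (finSumFinEquiv (Sum.inl m)) = e m
        simp only [e', Equiv.symm_apply_apply, Sum.elim_inl]
    have h1 := huv (k + S.arity o) (t.subst σ) e'
    rw [key u, key v] at h1
    exact h1

/-- Generators of the diagonal congruence lie in `zeta`, given the term condition. -/
theorem zeta_gen {B : Algebra S} {μ α : Cong B} (hTC : Centralizes μ α ⊥)
    {x y : B.carrier} (hxy : μ.r x y) :
    (zeta α).r ((dHom α).toFun x) ((dHom α).toFun y) := by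
  intro k t e
  have c1 : ∀ z : B.carrier,
      pfst (t.eval (pairAlg α) (Sum.elim (fun _ => (dHom α).toFun z) e))
        = t.eval B (Sum.elim (fun _ => z) (fun m => pfst (e m))) := by
    intro z
    rw [pfst_eval]
    refine congrArg (fun vv => t.eval B vv) ?_
    funext x
    rcases x with x | m
    · rfl
    · rfl
  have c2 : ∀ z : B.carrier,
      psnd (t.eval (pairAlg α) (Sum.elim (fun _ => (dHom α).toFun z) e))
        = t.eval B (Sum.elim (fun _ => z) (fun m => psnd (e m))) := by
    intro z
    rw [psnd_eval]
    refine congrArg (fun vv => t.eval B vv) ?_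
    funext x
    rcases x with x | m
    · rfl
    · rfl
  rw [c1 x, c2 x, c1 y, c2 y]
  have he : ∀ m, α.r (pfst (e m)) (psnd (e m)) := fun m => pmem (e m)
  constructor
  · intro hh
    have := hTC k t x y (fun m => pfst (e m)) (fun m => psnd (e m)) hxy he
      (Cong.bot_r.mpr hh)
    exact Cong.bot_r.mp this
  · intro hh
    have := hTC k t y x (fun m => pfst (e m)) (fun m => psnd (e m)) (μ.symm hxy) he
      (Cong.bot_r.mpr hh)
    exact Cong.bot_r.mp this

end Backward
/-- In a congruence-modular variety `V`, `α` laxly centralizes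
`μ` iff the commutator `[μ, α]` is trivial. -/
theorem laxCentralizes_iff_commutator_eq_bot {V : Algebra S → Prop}
    (hV : IsVariety V)
    (hmod : ∀ A : Algebra S, V A → IsModularLattice (Cong A))
    {B : Algebra S} (hB : V B) (μ α : Cong B) :
    LaxCentralizes V B μ α ↔ commutator μ α = ⊥ := by
  constructor
  · rintro ⟨C, hVC, π, β, γ, hsurj, hμ, hα, hβγ⟩
    have hmC := hmod C hVC
    have hVD : V (pairAlg β) :=
      hV.closed_sub _ (pairSub β) (hV.closed_prod _ _ (fun _ => hVC))
    have hmD := hmod _ hVD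
    have hTC : Centralizes μ α ⊥ := by
      intro n t a b c d hab hcd hyp
      classical
      set l := Function.surjInv hsurj with hldef
      have hl : ∀ x, π.toFun (l x) = x := fun x => Function.surjInv_eq hsurj x
      have hcomap1 : conComap π μ ≤ β ⊔ π.ker :=
        le_trans (conComap_mono π hμ) (conComap_conMap_le π hsurj β)
      have hcomap2 : conComap π α ≤ γ ⊔ π.ker :=
        le_trans (conComap_mono π hα) (conComap_conMap_le π hsurj γ)
      have hab' : (β ⊔ π.ker).r (l a) (l b) := by
        refine hcomap1 _ _ ?_
        show μ.r (π.toFun (l a)) (π.toFun (l b))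
        rw [hl, hl]; exact hab
      have hcd' : ∀ i, (γ ⊔ π.ker).r (l (c i)) (l (d i)) := by
        intro i
        refine hcomap2 _ _ ?_
        show α.r (π.toFun (l (c i))) (π.toFun (l (d i)))
        rw [hl, hl]; exact hcd i
      have hev : ∀ (x : B.carrier) (E : Fin n → B.carrier),
          π.toFun (t.eval C (Sum.elim (fun _ => l x) (fun i => l (E i))))
            = t.eval B (Sum.elim (fun _ => x) E) := by
        intro x E
        rw [π.eval_comm]
        refine congrArg (fun vv => t.eval B vv) ?_
        funext s
        rcases s with s | i
        · exact hl x
        · exact hl (E i)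
      have hyp' : π.ker.r (t.eval C (Sum.elim (fun _ => l a) (fun i => l (c i))))
          (t.eval C (Sum.elim (fun _ => l a) (fun i => l (d i)))) := by
        show π.toFun _ = π.toFun _
        rw [hev a c, hev a d]
        exact Cong.bot_r.mp hyp
      have hres := centr_up hmC hmD hβγ t hab' hcd' hyp'
      have : t.eval B (Sum.elim (fun _ => b) c) = t.eval B (Sum.elim (fun _ => b) d) := by
        rw [← hev b c, ← hev b d]
        exact hres
      exact Cong.bot_r.mpr this
    exact le_antisymm (sInf_le hTC) bot_le
  · intro hcomm
    have hTC : Centralizes μ α ⊥ := by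
      have hc : Centralizes μ α (commutator μ α) := by
        intro n t a b c d hab hcd hyp
        refine Cong.sInf_r.mpr ?_
        intro δ hδ
        exact hδ n t a b c d hab hcd (Cong.sInf_r.mp hyp δ hδ)
      rwa [hcomm] at hc
    have hVα : V (pairAlg α) :=
      hV.closed_sub _ (pairSub α) (hV.closed_prod _ _ (fun _ => hB))
    have hmα := hmod _ hVα
    let π : Hom (pairAlg α) B := ⟨pfst, fun o a => pfst_interp o a⟩
    let Δ' : Cong (pairAlg α) := conMap (dHom α) μ
    let η₁ : Cong (pairAlg α) := fstCong α (Cong.diag B)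
    let η₂ : Cong (pairAlg α) := sndCong α (Cong.diag B)
    refine ⟨pairAlg α, hVα, π, Δ', η₂, ?_, ?_, ?_, ?_⟩
    · intro b
      exact ⟨(dHom α).toFun b, rfl⟩
    · intro x y hxy
      exact conGen_r_of ⟨(dHom α).toFun x, (dHom α).toFun y, conMap_r_of (dHom α) hxy, rfl, rfl⟩
    · intro x y hxy
      exact conGen_r_of ⟨mkPair x y hxy, (dHom α).toFun y, rfl, rfl, rfl⟩
    · refine le_antisymm ?_ bot_le
      intro z w hzw
      obtain ⟨h1, h2⟩ := Cong.inf_r.mp hzw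
      have h2' : psnd z = psnd w := h2
      have hq' : α.r (pfst w) (pfst z) := by
        refine α.trans ?_ (α.symm (pmem z))
        rw [h2'] at *
        exact h2' ▸ pmem w
      have hsl := shifting hmα (d := Δ' ⊓ η₂) (inf_le_right)
        (show η₁.r z (mkPair (pfst z) (pfst z) (α.refl _)) from rfl)
        (show η₁.r w (mkPair (pfst w) (pfst z) hq') from rfl)
        (show η₂.r (mkPair (pfst z) (pfst z) (α.refl _)) (mkPair (pfst w) (pfst z) hq') from rfl)
        (Cong.inf_r.mpr ⟨h1, h2⟩)
      have h12 : η₁ ⊓ η₂ ≤ Δ' := by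
        intro p1 p2 h
        obtain ⟨ha, hb⟩ := Cong.inf_r.mp h
        have : p1 = p2 := pair_ext ha hb
        rw [this]
        exact Δ'.refl p2
      have hΔqq' : Δ'.r (mkPair (pfst z) (pfst z) (α.refl _)) (mkPair (pfst w) (pfst z) hq') :=
        Cong.r_of_le (sup_le inf_le_left h12) hsl
      have hζle : Δ' ≤ zeta α := by
        refine conGen_le ?_
        rintro p1 p2 ⟨x, y, hxy, rfl, rfl⟩
        exact zeta_gen hTC hxy
      have hζ := hζle _ _ hΔqq'
      have hdiag := (hζ 0 (Tm.var (Sum.inl ())) (fun i => i.elim0)).mp rfl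
      have hfst : pfst z = pfst w := by
        have : pfst (mkPair (pfst w) (pfst z) hq') = psnd (mkPair (pfst w) (pfst z) hq') := hdiag
        rw [pfst_mk, psnd_mk] at this
        exact this.symm
      exact Cong.bot_r.mpr (pair_ext hfst h2')

end UAlg
end

section
/- Let C₀, C_β, C_γ be algebras of the same signature, let π_β : C_β → C₀/β₀ and π_γ : C_γ → C₀/γ₀ be surjective homomorphisms for congruences β₀, γ₀ on C₀ with β₀ ∧ γ₀ = ⊥, and let C = {(c, b, g) : c ∈ C₀, b ∈ C_β, g ∈ C_γ, c/β₀ = π_β(b), c/γ₀ = π_γ(g)} be the induced subalgebra of C₀ × C_β × C_γ, with π₁ : C → C₀ the first projection. Let β = ker((c,b,g) ↦ b) and γ = ker((c,b,g) ↦ g) as congruences on C. Then: π₁ is surjective, the map C → C_β × C_γ, (c,b,g) ↦ (b,g), is injective (so β ∧ γ = ⊥), the maps (c,b,g) ↦ b and (c,b,g) ↦ g are surjective onto C_β and C_γ, and →π₁ β = β₀ and →π₁ γ = γ₀. -/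
/-!
Basic universal algebra: signatures, algebras, homomorphisms, congruences
(forming a complete lattice), generated congruences, images and preimages of
congruences, quotient algebras, subalgebras, products, ultraproducts,
varieties (classes closed under H, S, P), the term-condition commutator,
relatively free algebras, and lax centrality.
-/

universe u v

namespace UAlg

variable {S : Signature.{u}}

/-- The equality congruence. -/
def eqCong (A : Algebra S) : Cong A :=
  ⟨Eq, ⟨fun _ => rfl, Eq.symm, Eq.trans⟩, fun _ _ _ h => congrArg _ (funext h)⟩

theorem bot_r_iff {A : Algebra S} {x y : A.carrier} :
    (⊥ : Cong A).r x y ↔ x = y := by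
  constructor
  · intro h
    exact (bot_le : (⊥ : Cong A) ≤ eqCong A) x y h
  · rintro rfl
    exact (⊥ : Cong A).iseqv.refl x

theorem inf_r {A : Algebra S} {c d : Cong A} {x y : A.carrier}
    (h1 : c.r x y) (h2 : d.r x y) : (c ⊓ d).r x y := by
  show ∀ e ∈ ({c, d} : Set (Cong A)), e.r x y
  rintro e (rfl | rfl)
  · exact h1
  · exact h2

section Triple

variable (C₀ Cβ Cγ : Algebra S) (β₀ γ₀ : Cong C₀)
  (πβ : Hom Cβ (quotAlg C₀ β₀)) (πγ : Hom Cγ (quotAlg C₀ γ₀))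

/-- The algebra `C = {(c, b, g) : c/β₀ = π_β(b), c/γ₀ = π_γ(g)}`, the induced
subalgebra of `C₀ × C_β × C_γ`. -/
noncomputable def tripleAlg : Algebra S where
  carrier := {p : C₀.carrier × Cβ.carrier × Cγ.carrier //
    (natHom C₀ β₀).toFun p.1 = πβ.toFun p.2.1 ∧
    (natHom C₀ γ₀).toFun p.1 = πγ.toFun p.2.2}
  interp o a :=
    ⟨(C₀.interp o (fun i => (a i).1.1), Cβ.interp o (fun i => (a i).1.2.1),
        Cγ.interp o (fun i => (a i).1.2.2)), by
      constructor
      · rw [(natHom C₀ β₀).map_interp, πβ.map_interp]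
        exact congrArg _ (funext fun i => (a i).2.1)
      · rw [(natHom C₀ γ₀).map_interp, πγ.map_interp]
        exact congrArg _ (funext fun i => (a i).2.2)⟩

/-- The first projection `π₁ : C → C₀`. -/
noncomputable def tripleFst : Hom (tripleAlg C₀ Cβ Cγ β₀ γ₀ πβ πγ) C₀ :=
  ⟨fun p => p.1.1, fun _ _ => rfl⟩

/-- The projection `ν_β : C → C_β`, `(c, b, g) ↦ b`. -/
noncomputable def tripleSnd : Hom (tripleAlg C₀ Cβ Cγ β₀ γ₀ πβ πγ) Cβ :=
  ⟨fun p => p.1.2.1, fun _ _ => rfl⟩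

/-- The projection `ν_γ : C → C_γ`, `(c, b, g) ↦ g`. -/
noncomputable def tripleTrd : Hom (tripleAlg C₀ Cβ Cγ β₀ γ₀ πβ πγ) Cγ :=
  ⟨fun p => p.1.2.2, fun _ _ => rfl⟩

/-- The binary product of two algebras. -/
def prod2Alg (A B : Algebra S) : Algebra S where
  carrier := A.carrier × B.carrier
  interp o a := (A.interp o (fun i => (a i).1), B.interp o (fun i => (a i).2))

/-- The map `ι₁ : C → C_β × C_γ`, `(c, b, g) ↦ (b, g)`. -/
noncomputable def tripleEmb :
    Hom (tripleAlg C₀ Cβ Cγ β₀ γ₀ πβ πγ) (prod2Alg Cβ Cγ) :=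
  ⟨fun p => (p.1.2.1, p.1.2.2), fun _ _ => rfl⟩

/-- With `β₀ ∧ γ₀ = ⊥` and `π_β`, `π_γ` surjective: `π₁` is
surjective; `ι₁ : (c,b,g) ↦ (b,g)` is injective, and `β ∧ γ = ⊥` where
`β = ker((c,b,g) ↦ b)` and `γ = ker((c,b,g) ↦ g)`; the maps `(c,b,g) ↦ b` and
`(c,b,g) ↦ g` are surjective; and `→π₁ β = β₀` and `→π₁ γ = γ₀`. -/
theorem triple_properties (hβγ : β₀ ⊓ γ₀ = ⊥)
    (hπβ : Function.Surjective πβ.toFun)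
    (hπγ : Function.Surjective πγ.toFun) :
    Function.Surjective (tripleFst C₀ Cβ Cγ β₀ γ₀ πβ πγ).toFun ∧
    Function.Injective (tripleEmb C₀ Cβ Cγ β₀ γ₀ πβ πγ).toFun ∧
    (tripleSnd C₀ Cβ Cγ β₀ γ₀ πβ πγ).ker ⊓ (tripleTrd C₀ Cβ Cγ β₀ γ₀ πβ πγ).ker = ⊥ ∧
    Function.Surjective (tripleSnd C₀ Cβ Cγ β₀ γ₀ πβ πγ).toFun ∧
    Function.Surjective (tripleTrd C₀ Cβ Cγ β₀ γ₀ πβ πγ).toFun ∧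
    conMap (tripleFst C₀ Cβ Cγ β₀ γ₀ πβ πγ) (tripleSnd C₀ Cβ Cγ β₀ γ₀ πβ πγ).ker = β₀ ∧
    conMap (tripleFst C₀ Cβ Cγ β₀ γ₀ πβ πγ) (tripleTrd C₀ Cβ Cγ β₀ γ₀ πβ πγ).ker = γ₀ := by
  -- membership helper: build an element of C above a given c ∈ C₀
  have mk : ∀ c : C₀.carrier, ∃ p : (tripleAlg C₀ Cβ Cγ β₀ γ₀ πβ πγ).carrier,
      p.1.1 = c := by
    intro c
    obtain ⟨b, hb⟩ := hπβ ((natHom C₀ β₀).toFun c)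
    obtain ⟨g, hg⟩ := hπγ ((natHom C₀ γ₀).toFun c)
    exact ⟨⟨(c, b, g), hb.symm, hg.symm⟩, rfl⟩
  have hinj : Function.Injective (tripleEmb C₀ Cβ Cγ β₀ γ₀ πβ πγ).toFun := by
    rintro ⟨⟨c, b, g⟩, h1, h2⟩ ⟨⟨c', b', g'⟩, h1', h2'⟩ h
    have hb : b = b' := congrArg Prod.fst h
    have hg : g = g' := congrArg Prod.snd h
    subst hb; subst hg
    have hβ : β₀.r c c' := Quotient.exact (h1.trans h1'.symm)
    have hγ : γ₀.r c c' := Quotient.exact (h2.trans h2'.symm)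
    have : c = c' := bot_r_iff.mp (hβγ ▸ inf_r hβ hγ)
    subst this; rfl
  refine ⟨?_, hinj, ?_, ?_, ?_, ?_, ?_⟩
  · intro c
    obtain ⟨p, hp⟩ := mk c
    exact ⟨p, hp⟩
  · -- β ⊓ γ = ⊥
    apply le_antisymm
    · intro x y h
      have hb : x.1.2.1 = y.1.2.1 := h (tripleSnd C₀ Cβ Cγ β₀ γ₀ πβ πγ).ker (by left; rfl)
      have hg : x.1.2.2 = y.1.2.2 := h (tripleTrd C₀ Cβ Cγ β₀ γ₀ πβ πγ).ker
        (by right; rfl)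
      have : x = y := hinj (Prod.ext hb hg)
      exact bot_r_iff.mpr this
    · exact bot_le
  · -- snd surjective
    intro b
    obtain ⟨g, hg⟩ := hπγ ((natHom C₀ γ₀).toFun (πβ.toFun b).out)
    exact ⟨⟨((πβ.toFun b).out, b, g), (Quotient.out_eq _), hg.symm⟩, rfl⟩
  · -- trd surjective
    intro g
    obtain ⟨b, hb⟩ := hπβ ((natHom C₀ β₀).toFun (πγ.toFun g).out)
    exact ⟨⟨((πγ.toFun g).out, b, g), hb.symm, (Quotient.out_eq _)⟩, rfl⟩
  · -- conMap π₁ β = β₀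
    apply le_antisymm
    · apply sInf_le
      rintro x y ⟨p, q, hpq, rfl, rfl⟩
      exact Quotient.exact ((p.2.1.trans (congrArg πβ.toFun hpq)).trans q.2.1.symm)
    · intro x y h
      intro e he
      apply he
      obtain ⟨b, hb⟩ := hπβ ((natHom C₀ β₀).toFun x)
      obtain ⟨g, hg⟩ := hπγ ((natHom C₀ γ₀).toFun x)
      obtain ⟨g', hg'⟩ := hπγ ((natHom C₀ γ₀).toFun y)
      refine ⟨⟨(x, b, g), hb.symm, hg.symm⟩,
        ⟨(y, b, g'), ?_, hg'.symm⟩, rfl, rfl, rfl⟩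
      show (natHom C₀ β₀).toFun y = πβ.toFun b
      rw [hb]
      exact @Quotient.sound _ β₀.toSetoid y x (β₀.iseqv.symm h)
  · -- conMap π₁ γ = γ₀
    apply le_antisymm
    · apply sInf_le
      rintro x y ⟨p, q, hpq, rfl, rfl⟩
      exact Quotient.exact ((p.2.2.trans (congrArg πγ.toFun hpq)).trans q.2.2.symm)
    · intro x y h
      intro e he
      apply he
      obtain ⟨b, hb⟩ := hπβ ((natHom C₀ β₀).toFun x)
      obtain ⟨b', hb'⟩ := hπβ ((natHom C₀ β₀).toFun y)
      obtain ⟨g, hg⟩ := hπγ ((natHom C₀ γ₀).toFun x)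
      refine ⟨⟨(x, b, g), hb.symm, hg.symm⟩,
        ⟨(y, b', g), hb'.symm, ?_⟩, rfl, rfl, rfl⟩
      show (natHom C₀ γ₀).toFun y = πγ.toFun g
      rw [hg]
      exact @Quotient.sound _ γ₀.toSetoid y x (γ₀.iseqv.symm h)

end Triple

end UAlg
end
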